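/- Let A be a set of n agents with monotone subadditive valuations v_i : 2^G → ℝ, v_i(∅) = 0, over a finite item set G. For every partial allocation S = (S_i)_{i∈A} of the items, there exists a complete allocation T = (T_i)_{i∈A} (a partition of G) such that T is ½-EFX and NSW(T) ≥ ½·NSW(S). -/

import Mathlib

open Finset
set_option linter.unusedSectionVars false
set_option linter.unusedVariables false
set_option maxHeartbeats 1000000

namespace HalfEFX

variable {G A : Type*} [Fintype G] [DecidableEq G] [Fintype A] [DecidableEq A]

/-- pairwise disjoint partial allocation -/
def Disj (X : A → Finset G) : Prop := ∀ i k : A, i ≠ k → Disjoint (X i) (X k)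

/-- half-EFX condition (scaled form) -/
def HEFX (v : A → Finset G → ℝ) (X : A → Finset G) : Prop :=
  ∀ i k : A, ∀ j ∈ X k, v i ((X k).erase j) ≤ 2 * v i (X i)

/-- Nash product -/
def prodv (v : A → Finset G → ℝ) (X : A → Finset G) : ℝ := ∏ a, v a (X a)

section Basic

variable {v : A → Finset G → ℝ}

theorem vnn (hmono : ∀ i, ∀ S T : Finset G, S ⊆ T → v i S ≤ v i T)
    (hv0 : ∀ i, v i ∅ = 0) (i : A) (B : Finset G) : 0 ≤ v i B := by
  simpa [hv0 i] using hmono i ∅ B (empty_subset B)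

theorem vsub2 (hmono : ∀ i, ∀ S T : Finset G, S ⊆ T → v i S ≤ v i T)
    (hsubadd : ∀ i, ∀ S T : Finset G, v i (S ∪ T) ≤ v i S + v i T)
    (i : A) {X P Q : Finset G} (h : X ⊆ P ∪ Q) : v i X ≤ v i P + v i Q :=
  le_trans (hmono i _ _ h) (hsubadd i P Q)

theorem vsplit (hmono : ∀ i, ∀ S T : Finset G, S ⊆ T → v i S ≤ v i T)
    (hsubadd : ∀ i, ∀ S T : Finset G, v i (S ∪ T) ≤ v i S + v i T)
    (i : A) (B Z : Finset G) : v i B ≤ v i (B \ Z) + v i Z := by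
  refine vsub2 hmono hsubadd i ?_
  intro g hg
  by_cases hz : g ∈ Z
  · exact mem_union_right _ hz
  · exact mem_union_left _ (mem_sdiff.2 ⟨hg, hz⟩)

/-- there is a product-optimal disjoint allocation -/
theorem exists_opt [Nonempty A] (hmono : ∀ i, ∀ S T : Finset G, S ⊆ T → v i S ≤ v i T)
    (hv0 : ∀ i, v i ∅ = 0) :
    ∃ O : A → Finset G, Disj O ∧ ∀ W : A → Finset G, Disj W → prodv v W ≤ prodv v O := by
  classical
  have hne : ((univ : Finset (A → Finset G)).filter (fun X => Disj X)).Nonempty := by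
    refine ⟨fun _ => ∅, ?_⟩
    simp only [mem_filter, mem_univ, true_and]
    intro i k _; simp
  obtain ⟨O, hOmem, hOmax⟩ := Finset.exists_max_image _ (fun X => prodv v X) hne
  refine ⟨O, (mem_filter.1 hOmem).2, fun W hW => ?_⟩
  exact hOmax W (by simp only [mem_filter, mem_univ, true_and]; exact hW)

end Basic

section Swap

variable {v : A → Finset G → ℝ} {O : A → Finset G}

/-- the reallocation used in exchange arguments: participants `c 0, …, c m` lose `D s`
and receive `E s`; everyone else keeps `O`. -/
noncomputable def swapW (O : A → Finset G) (m : ℕ) (c : ℕ → A) (D E : ℕ → Finset G) :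
    A → Finset G := fun b =>
  if h : ∃ s, s ≤ m ∧ c s = b then
    (O b \ D (Nat.find h)) ∪ E (Nat.find h)
  else O b

theorem swapW_lookup (m : ℕ) (c : ℕ → A) (D E : ℕ → Finset G)
    (hinj : ∀ s t, s ≤ m → t ≤ m → c s = c t → s = t) {s : ℕ} (hs : s ≤ m) :
    swapW O m c D E (c s) = (O (c s) \ D s) ∪ E s := by
  have h : ∃ t, t ≤ m ∧ c t = c s := ⟨s, hs, rfl⟩
  have hspec := Nat.find_spec h
  have : Nat.find h = s := hinj _ _ hspec.1 hs hspec.2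
  simp only [swapW, dif_pos h, this]

theorem swapW_other (m : ℕ) (c : ℕ → A) (D E : ℕ → Finset G) {b : A}
    (hb : ¬ ∃ s, s ≤ m ∧ c s = b) : swapW O m c D E b = O b := by
  simp only [swapW, dif_neg hb]

theorem swapW_disj (hO : Disj O)
    (m : ℕ) (c : ℕ → A) (D E : ℕ → Finset G) (ρ : ℕ → ℕ)
    (hinj : ∀ s t, s ≤ m → t ≤ m → c s = c t → s = t)
    (hD : ∀ s, s ≤ m → D s ⊆ O (c s))
    (hρ : ∀ s, s ≤ m → ρ s ≤ m ∧ E s ⊆ D (ρ s))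
    (hρinj : ∀ s t, s ≤ m → t ≤ m → ρ s = ρ t → s = t) :
    Disj (swapW O m c D E) := by
  intro b b' hne
  have key : ∀ x, x ∈ swapW O m c D E b → x ∈ swapW O m c D E b' → False := by
    intro x hxb hxb'
    -- location function: each element of swapW of an agent lies either in O-of-that-agent minus D,
    -- or in E-part which sits inside D (ρ s) ⊆ O (c (ρ s)).
    -- We determine, for each of b, b', a "home" agent and whether it is a D-portion.
    have locate : ∀ (b : A), x ∈ swapW O m c D E b →
        (∃ s, s ≤ m ∧ c s = b ∧ x ∈ O b \ D s) ∨
        (∃ s, s ≤ m ∧ c s = b ∧ x ∈ E s) ∨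
        ((¬ ∃ s, s ≤ m ∧ c s = b) ∧ x ∈ O b) := by
      intro b hxb
      by_cases h : ∃ s, s ≤ m ∧ c s = b
      · obtain ⟨s, hs, hcs⟩ := h
        rw [← hcs] at hxb ⊢
        rw [swapW_lookup m c D E hinj hs] at hxb
        rcases mem_union.1 hxb with h1 | h2
        · exact Or.inl ⟨s, hs, rfl, h1⟩
        · exact Or.inr (Or.inl ⟨s, hs, rfl, h2⟩)
      · rw [swapW_other m c D E h] at hxb
        exact Or.inr (Or.inr ⟨h, hxb⟩)
    -- x's true home in O:
    have homeO : ∀ (b : A), x ∈ swapW O m c D E b →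
        (∃ s, s ≤ m ∧ c s = b ∧ x ∈ O b ∧ x ∉ D s) ∨
        (∃ s, s ≤ m ∧ c s = b ∧ x ∈ D (ρ s) ∧ x ∈ O (c (ρ s))) ∨
        ((¬ ∃ s, s ≤ m ∧ c s = b) ∧ x ∈ O b) := by
      intro b hxb
      rcases locate b hxb with ⟨s, hs, hcs, hx⟩ | ⟨s, hs, hcs, hx⟩ | ⟨h, hx⟩
      · exact Or.inl ⟨s, hs, hcs, (mem_sdiff.1 hx).1, (mem_sdiff.1 hx).2⟩
      · have hxd : x ∈ D (ρ s) := (hρ s hs).2 hx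
        exact Or.inr (Or.inl ⟨s, hs, hcs, hxd, hD _ (hρ s hs).1 hxd⟩)
      · exact Or.inr (Or.inr ⟨h, hx⟩)
    -- derive the home agent of x for b and b' and compare
    have homeAgent : ∀ (b : A), x ∈ swapW O m c D E b → ∃ a : A, x ∈ O a ∧
        ((∃ s, s ≤ m ∧ c s = b ∧ a = b ∧ x ∉ D s) ∨
         (∃ s, s ≤ m ∧ c s = b ∧ a = c (ρ s) ∧ x ∈ D (ρ s)) ∨
         ((¬ ∃ s, s ≤ m ∧ c s = b) ∧ a = b)) := by
      intro b hxb
      rcases homeO b hxb with ⟨s, hs, hcs, hx1, hx2⟩ | ⟨s, hs, hcs, hx1, hx2⟩ | ⟨h, hx⟩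
      · exact ⟨b, hx1, Or.inl ⟨s, hs, hcs, rfl, hx2⟩⟩
      · exact ⟨c (ρ s), hx2, Or.inr (Or.inl ⟨s, hs, hcs, rfl, hx1⟩)⟩
      · exact ⟨b, hx, Or.inr (Or.inr ⟨h, rfl⟩)⟩
    obtain ⟨a, hxa, hcase⟩ := homeAgent b hxb
    obtain ⟨a', hxa', hcase'⟩ := homeAgent b' hxb'
    have haa : a = a' := by
      by_contra hne'
      exact (disjoint_left.1 (hO a a' hne')) hxa hxa'
    subst haa
    rcases hcase with ⟨s, hs, hcs, ha, hnd⟩ | ⟨s, hs, hcs, ha, hd⟩ | ⟨h, ha⟩ <;>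
      rcases hcase' with ⟨s', hs', hcs', ha', hnd'⟩ | ⟨s', hs', hcs', ha', hd'⟩ | ⟨h', ha'⟩
    · exact hne (ha.symm.trans ha')
    · have hss : ρ s' = s :=
        hinj _ _ (hρ s' hs').1 hs (((ha'.symm.trans ha).trans hcs.symm).symm ▸ rfl)
      rw [hss] at hd'; exact hnd hd'
    · exact h' ⟨s, hs, hcs.trans (ha.symm.trans ha')⟩
    · have hss : ρ s = s' :=
        hinj _ _ (hρ s hs).1 hs' (((ha.symm.trans ha').trans hcs'.symm).symm ▸ rfl)
      rw [hss] at hd; exact hnd' hd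
    · have hrr : ρ s = ρ s' := hinj _ _ (hρ s hs).1 (hρ s' hs').1 (ha.symm.trans ha')
      have hss : s = s' := hρinj _ _ hs hs' hrr
      exact hne ((hcs.symm.trans (by rw [hss])).trans hcs')
    · exact h' ⟨ρ s, (hρ s hs).1, ha.symm.trans ha'⟩
    · exact h ⟨s', hs', hcs'.trans (ha'.symm.trans ha)⟩
    · exact h ⟨ρ s', (hρ s' hs').1, ha'.symm.trans ha⟩
    · exact hne (ha.symm.trans ha')
  exact disjoint_left.2 fun {x} hx hx' => key x hx hx'

end Swap

section Exchange

variable {v : A → Finset G → ℝ} {O : A → Finset G}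

theorem chainBound
    (hmono : ∀ i, ∀ S T : Finset G, S ⊆ T → v i S ≤ v i T)
    (hsubadd : ∀ i, ∀ S T : Finset G, v i (S ∪ T) ≤ v i S + v i T)
    (hv0 : ∀ i, v i ∅ = 0)
    (hO : Disj O) (hOpt : ∀ W : A → Finset G, Disj W → prodv v W ≤ prodv v O)
    (hpos : ∀ a, 0 < v a (O a))
    (R : ℕ) (hR : 1 ≤ R) (c : ℕ → A) (D : ℕ → Finset G)
    (hinj : ∀ s t, s ≤ R → t ≤ R → c s = c t → s = t)
    (hDsub : ∀ s, s ≤ R → D s ⊆ O (c s))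
    (hcrav : ∀ s, s < R → 2 * v (c (s+1)) (D (s+1)) < v (c (s+1)) (D s))
    (hhalf : ∀ s, 1 ≤ s → s ≤ R → v (c s) (O (c s)) ≤ 2 * v (c s) (D s))
    (hlast : D R = O (c R)) :
    v (c 0) (O (c 0)) ≤ 2 * v (c 0) (D 0) := by
  by_contra hcon
  push_neg at hcon
  classical
  set E : ℕ → Finset G := fun s => if s = 0 then ∅ else D (s - 1) with hE
  set ρ : ℕ → ℕ := fun s => if s = 0 then R else s - 1 with hρdef
  have hρ : ∀ s, s ≤ R → ρ s ≤ R ∧ E s ⊆ D (ρ s) := by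
    intro s hs
    by_cases h0 : s = 0
    · subst h0; simp [hE, hρdef]
    · constructor
      · simp only [hρdef, if_neg h0]; omega
      · simp only [hE, hρdef, if_neg h0]
        exact subset_rfl
  have hρinj : ∀ s t, s ≤ R → t ≤ R → ρ s = ρ t → s = t := by
    intro s t hs ht h
    by_cases h0 : s = 0 <;> by_cases h1 : t = 0 <;>
      simp only [hρdef, h0, h1, if_pos, if_neg, if_true, if_false] at h <;> omega
  set W := swapW O R c D E with hW
  have hWdisj : Disj W := swapW_disj hO R c D E ρ hinj hDsub hρ hρinj
  have hle : prodv v W ≤ prodv v O := hOpt W hWdisj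
  have hc0R : c 0 ≠ c R := fun h => by have := hinj 0 R (Nat.zero_le _) le_rfl h; omega
  -- factor bounds
  have fact0 : v (c 0) (O (c 0)) - v (c 0) (D 0) ≤ v (c 0) (W (c 0)) := by
    have hl : W (c 0) = (O (c 0) \ D 0) ∪ E 0 := swapW_lookup R c D E hinj (Nat.zero_le _)
    have : E 0 = ∅ := by simp [hE]
    rw [hl, this, union_empty]
    have := vsplit hmono hsubadd (c 0) (O (c 0)) (D 0)
    linarith
  have factR : 2 * v (c R) (O (c R)) ≤ v (c R) (W (c R)) := by
    have hl : W (c R) = (O (c R) \ D R) ∪ E R := swapW_lookup R c D E hinj le_rfl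
    have hER : E R = D (R - 1) := by simp only [hE]; rw [if_neg (by omega)]
    have hsub : D (R - 1) ⊆ W (c R) := by rw [hl, hER]; exact subset_union_right
    have h1 : v (c R) (D (R - 1)) ≤ v (c R) (W (c R)) := hmono _ _ _ hsub
    have h2 := hcrav (R - 1) (by omega)
    have h3 : R - 1 + 1 = R := by omega
    rw [h3] at h2
    rw [hlast] at h2
    linarith
  have factMid : ∀ s, 1 ≤ s → s < R → v (c s) (O (c s)) ≤ v (c s) (W (c s)) := by
    intro s h1 h2
    have hl : W (c s) = (O (c s) \ D s) ∪ E s := swapW_lookup R c D E hinj (by omega)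
    have hES : E s = D (s - 1) := by simp only [hE]; rw [if_neg (by omega)]
    have hsub : D (s - 1) ⊆ W (c s) := by rw [hl, hES]; exact subset_union_right
    have hv1 : v (c s) (D (s - 1)) ≤ v (c s) (W (c s)) := hmono _ _ _ hsub
    have hv2 := hcrav (s - 1) (by omega)
    have h3 : s - 1 + 1 = s := by omega
    rw [h3] at hv2
    have hv3 := hhalf s h1 (by omega)
    linarith
  set L : A → ℝ := fun b =>
    if b = c 0 then v (c 0) (O (c 0)) - v (c 0) (D 0)
    else if b = c R then 2 * v (c R) (O (c R)) else v b (O b) with hLdef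
  have hLnn : ∀ b, 0 ≤ L b := by
    intro b
    simp only [hLdef]
    split_ifs with h1 h2
    · have := vnn hmono hv0 (c 0) (D 0); linarith
    · have := hpos (c R); linarith
    · exact le_of_lt (hpos b)
  have hLW : ∀ b, L b ≤ v b (W b) := by
    intro b
    simp only [hLdef]
    split_ifs with h1 h2
    · subst h1; exact fact0
    · subst h2; exact factR
    · by_cases hpart : ∃ s, s ≤ R ∧ c s = b
      · obtain ⟨s, hs, hcs⟩ := hpart
        have hs0 : s ≠ 0 := fun h => h1 (by rw [← hcs, h])
        have hsR : s ≠ R := fun h => h2 (by rw [← hcs, h])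
        rw [← hcs]
        exact factMid s (by omega) (by omega)
      · have hWb : W b = O b := swapW_other R c D E hpart
        rw [hWb]
  have hprod : ∏ b, L b ≤ prodv v O := by
    refine le_trans (Finset.prod_le_prod (fun b _ => hLnn b) (fun b _ => hLW b)) hle
  -- compute the product of L
  have hcRmem : c R ∈ (univ : Finset A).erase (c 0) := mem_erase.2 ⟨(Ne.symm hc0R), mem_univ _⟩
  have hsplitL : ∏ b, L b = L (c 0) * (L (c R) * ∏ b ∈ ((univ : Finset A).erase (c 0)).erase (c R), L b) := by
    rw [← Finset.mul_prod_erase _ _ (mem_univ (c 0)), ← Finset.mul_prod_erase _ _ hcRmem]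
  have hsplitO : prodv v O = v (c 0) (O (c 0)) * (v (c R) (O (c R)) * ∏ b ∈ ((univ : Finset A).erase (c 0)).erase (c R), v b (O b)) := by
    rw [prodv, ← Finset.mul_prod_erase _ _ (mem_univ (c 0)), ← Finset.mul_prod_erase _ _ hcRmem]
  have hLrest : ∏ b ∈ ((univ : Finset A).erase (c 0)).erase (c R), L b
      = ∏ b ∈ ((univ : Finset A).erase (c 0)).erase (c R), v b (O b) := by
    refine Finset.prod_congr rfl (fun b hb => ?_)
    have hb1 : b ≠ c R := (mem_erase.1 hb).1
    have hb2 : b ≠ c 0 := (mem_erase.1 (mem_erase.1 hb).2).1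
    simp only [hLdef, if_neg hb2, if_neg hb1]
  have hPpos : 0 < ∏ b ∈ ((univ : Finset A).erase (c 0)).erase (c R), v b (O b) :=
    Finset.prod_pos (fun b _ => hpos b)
  set X := v (c 0) (O (c 0)) with hXd
  set Y := v (c 0) (D 0) with hYd
  set BR := v (c R) (O (c R)) with hBRd
  set P := ∏ b ∈ ((univ : Finset A).erase (c 0)).erase (c R), v b (O b) with hPd
  have hBR : 0 < BR := hpos (c R)
  rw [hsplitL, hLrest] at hprod
  rw [hsplitO] at hprod
  simp only [hLdef, if_pos rfl, if_neg (Ne.symm hc0R), if_neg hc0R, if_true] at hprod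
  have hBP : 0 < BR * P := mul_pos hBR hPpos
  have h3 : 2 * (X - Y) ≤ X := by
    have h4 : (2 * (X - Y)) * (BR * P) ≤ X * (BR * P) := by nlinarith [hprod]
    exact (mul_le_mul_iff_of_pos_right hBP).1 h4
  linarith

end Exchange

section Exchange2

variable {v : A → Finset G → ℝ} {O : A → Finset G}

theorem noCycle
    (hmono : ∀ i, ∀ S T : Finset G, S ⊆ T → v i S ≤ v i T)
    (hv0 : ∀ i, v i ∅ = 0)
    (hO : Disj O) (hOpt : ∀ W : A → Finset G, Disj W → prodv v W ≤ prodv v O)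
    (hpos : ∀ a, 0 < v a (O a))
    (R t : ℕ) (ht1 : 1 ≤ t) (htR : t ≤ R) (c : ℕ → A) (D : ℕ → Finset G)
    (hinj : ∀ s u, s ≤ R → u ≤ R → c s = c u → s = u)
    (hDsub : ∀ s, s ≤ R → D s ⊆ O (c s))
    (hcrav : ∀ s, s < R → 2 * v (c (s+1)) (D (s+1)) < v (c (s+1)) (D s))
    (hhalf : ∀ s, s ≤ R → v (c s) (O (c s)) ≤ 2 * v (c s) (D s))
    (Z : Finset G) (hZ : Z ⊆ D t) (hZcrav : 2 * v (c 0) (D 0) < v (c 0) Z) :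
    False := by
  classical
  set E : ℕ → Finset G := fun s => if s = 0 then Z else D (s - 1) with hE
  set ρ : ℕ → ℕ := fun s => if s = 0 then t else s - 1 with hρdef
  have hinj' : ∀ s u, s ≤ t → u ≤ t → c s = c u → s = u :=
    fun s u hs hu h => hinj s u (le_trans hs htR) (le_trans hu htR) h
  have hρ : ∀ s, s ≤ t → ρ s ≤ t ∧ E s ⊆ D (ρ s) := by
    intro s hs
    by_cases h0 : s = 0
    · subst h0; refine ⟨by simp [hρdef], ?_⟩
      simp only [hE, hρdef, if_pos rfl]
      exact hZ
    · refine ⟨by simp only [hρdef, if_neg h0]; omega, ?_⟩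
      simp only [hE, hρdef, if_neg h0]
      exact subset_rfl
  have hρinj : ∀ s u, s ≤ t → u ≤ t → ρ s = ρ u → s = u := by
    intro s u hs hu h
    by_cases h0 : s = 0 <;> by_cases h1 : u = 0 <;>
      simp only [hρdef, h0, h1, if_pos, if_neg, if_true, if_false] at h <;> omega
  set W := swapW O t c D E with hW
  have hWdisj : Disj W :=
    swapW_disj hO t c D E ρ hinj' (fun s hs => hDsub s (le_trans hs htR)) hρ hρinj
  have hle : prodv v W ≤ prodv v O := hOpt W hWdisj
  have hfac : ∀ b, v b (O b) ≤ v b (W b) := by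
    intro b
    by_cases hpart : ∃ s, s ≤ t ∧ c s = b
    · obtain ⟨s, hs, hcs⟩ := hpart
      rw [← hcs]
      have hl : W (c s) = (O (c s) \ D s) ∪ E s := swapW_lookup t c D E hinj' hs
      by_cases h0 : s = 0
      · subst h0
        have hsub : Z ⊆ W (c 0) := by
          rw [hl]; simp only [hE, if_pos rfl]; exact subset_union_right
        have h1 : v (c 0) Z ≤ v (c 0) (W (c 0)) := hmono _ _ _ hsub
        have h2 := hhalf 0 (Nat.zero_le _)
        have h3 := vnn hmono hv0 (c 0) (D 0)
        linarith
      · have hsub : D (s - 1) ⊆ W (c s) := by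
          rw [hl]; simp only [hE, if_neg h0]; exact subset_union_right
        have h1 : v (c s) (D (s - 1)) ≤ v (c s) (W (c s)) := hmono _ _ _ hsub
        have h2 := hcrav (s - 1) (by omega)
        have h3 : s - 1 + 1 = s := by omega
        rw [h3] at h2
        have h4 := hhalf s (le_trans hs htR)
        linarith
    · have hWb : W b = O b := swapW_other t c D E hpart
      rw [hWb]
  have hstrict : ∃ b ∈ (univ : Finset A), v b (O b) < v b (W b) := by
    refine ⟨c 0, mem_univ _, ?_⟩
    have hl : W (c 0) = (O (c 0) \ D 0) ∪ E 0 := swapW_lookup t c D E hinj' (Nat.zero_le _)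
    have hsub : Z ⊆ W (c 0) := by
      rw [hl]; simp only [hE, if_pos rfl]; exact subset_union_right
    have h1 : v (c 0) Z ≤ v (c 0) (W (c 0)) := hmono _ _ _ hsub
    have h2 := hhalf 0 (Nat.zero_le _)
    have h3 := vnn hmono hv0 (c 0) (D 0)
    linarith
  have : prodv v O < prodv v W :=
    Finset.prod_lt_prod (fun b _ => hpos b) (fun b _ => hfac b) hstrict
  linarith

end Exchange2

section Phase1

variable {v : A → Finset G → ℝ} {O : A → Finset G}

/-- justification chain for agent `a`'s current bundle -/
def ChainOK (v : A → Finset G → ℝ) (O X : A → Finset G) (a : A) : Prop :=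
  ∃ (R : ℕ) (c : ℕ → A) (D : ℕ → Finset G),
    c 0 = a ∧ D 0 = X a ∧
    (∀ s t, s ≤ R → t ≤ R → c s = c t → s = t) ∧
    (∀ s, s < R → 2 * v (c (s+1)) (D (s+1)) < v (c (s+1)) (D s)) ∧
    (∀ s, s ≤ R → D s ⊆ O (c s) ∧ v (c s) (O (c s)) ≤ 2 * v (c s) (D s) ∧ X (c s) ⊆ D s) ∧
    D R = O (c R)

theorem phase1
    (hmono : ∀ i, ∀ S T : Finset G, S ⊆ T → v i S ≤ v i T)
    (hsubadd : ∀ i, ∀ S T : Finset G, v i (S ∪ T) ≤ v i S + v i T)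
    (hv0 : ∀ i, v i ∅ = 0)
    (hO : Disj O) (hOpt : ∀ W : A → Finset G, Disj W → prodv v W ≤ prodv v O)
    (hpos : ∀ a, 0 < v a (O a)) :
    ∃ X : A → Finset G, Disj X ∧ HEFX v X ∧ ∀ a, v a (O a) ≤ 2 * v a (X a) := by
  classical
  suffices H : ∀ N, ∀ X : A → Finset G, (∑ a, (X a).card) ≤ N → Disj X →
      (∀ a, X a ⊆ O a) → (∀ a, ChainOK v O X a) →
      ∃ Y, Disj Y ∧ HEFX v Y ∧ ∀ a, v a (O a) ≤ 2 * v a (Y a) by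
    refine H (∑ a, (O a).card) O le_rfl hO (fun a => subset_rfl) (fun a => ?_)
    refine ⟨0, fun _ => a, fun _ => O a, rfl, rfl, ?_, ?_, ?_, rfl⟩
    · intro s t hs ht _; omega
    · intro s hs; omega
    · intro s hs
      refine ⟨subset_rfl, ?_, subset_rfl⟩
      have := vnn hmono hv0 a (O a); linarith
  intro N
  induction N using Nat.strong_induction_on with
  | _ N IH =>
  intro X hXN hdisj hsub hchain
  by_cases hefx : HEFX v X
  · refine ⟨X, hdisj, hefx, fun a => ?_⟩
    obtain ⟨R, c, D, hc0, hD0, hinj, hcrav, hmem, hlast⟩ := hchain a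
    have := (hmem 0 (Nat.zero_le _)).2.1
    rw [hc0, hD0] at this
    exact this
  · simp only [HEFX] at hefx
    push_neg at hefx
    obtain ⟨i, k, j, hj, hviol⟩ := hefx
    set Z := (X k).erase j with hZdef
    have hZsubX : Z ⊆ X k := erase_subset _ _
    have hik : k ≠ i := by
      intro h
      subst h
      have h1 : v k Z ≤ v k (X k) := hmono _ _ _ hZsubX
      have h2 := vnn hmono hv0 k (X k)
      simp only [hZdef] at hviol
      linarith
    obtain ⟨R, c, D, hc0, hD0, hinj, hcrav, hmem, hlast⟩ := hchain i
    -- k does not occur in i's chain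
    have hknotin : ∀ s, s ≤ R → c s ≠ k := by
      intro s hs hcs
      by_cases hs0 : s = 0
      · subst hs0; rw [hc0] at hcs; exact hik hcs.symm
      · -- cycle: contradiction via noCycle
        refine noCycle hmono hv0 hO hOpt hpos R s (by omega) hs c D hinj
          (fun u hu => (hmem u hu).1) hcrav
          (fun u hu => (hmem u hu).2.1) Z ?_ ?_
        · have hXc : X (c s) ⊆ D s := (hmem s hs).2.2
          rw [hcs] at hXc
          exact subset_trans hZsubX hXc
        · rw [hc0, hD0]; exact hviol
    -- the consed chain
    set c' : ℕ → A := fun s => if s = 0 then k else c (s - 1) with hc'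
    set D' : ℕ → Finset G := fun s => if s = 0 then Z else D (s - 1) with hD'
    have hc'0 : c' 0 = k := by simp [hc']
    have hc'succ : ∀ s, c' (s + 1) = c s := by intro s; simp [hc']
    have hD'0 : D' 0 = Z := by simp [hD']
    have hD'succ : ∀ s, D' (s + 1) = D s := by intro s; simp [hD']
    have hinj' : ∀ s t, s ≤ R + 1 → t ≤ R + 1 → c' s = c' t → s = t := by
      intro s t hs ht h
      by_cases hs0 : s = 0 <;> by_cases ht0 : t = 0
      · omega
      · exfalso
        subst hs0
        obtain ⟨t', rfl⟩ : ∃ t', t = t' + 1 := ⟨t - 1, by omega⟩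
        rw [hc'0, hc'succ] at h
        exact hknotin t' (by omega) h.symm
      · exfalso
        subst ht0
        obtain ⟨s', rfl⟩ : ∃ s', s = s' + 1 := ⟨s - 1, by omega⟩
        rw [hc'0, hc'succ] at h
        exact hknotin s' (by omega) h
      · obtain ⟨s', rfl⟩ : ∃ s', s = s' + 1 := ⟨s - 1, by omega⟩
        obtain ⟨t', rfl⟩ : ∃ t', t = t' + 1 := ⟨t - 1, by omega⟩
        rw [hc'succ, hc'succ] at h
        have := hinj s' t' (by omega) (by omega) h
        omega
    have hDsub' : ∀ s, s ≤ R + 1 → D' s ⊆ O (c' s) := by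
      intro s hs
      by_cases hs0 : s = 0
      · subst hs0
        rw [hD'0, hc'0]
        exact subset_trans hZsubX (hsub k)
      · obtain ⟨s', rfl⟩ : ∃ s', s = s' + 1 := ⟨s - 1, by omega⟩
        rw [hD'succ, hc'succ]
        exact (hmem s' (by omega)).1
    have hcrav' : ∀ s, s < R + 1 → 2 * v (c' (s+1)) (D' (s+1)) < v (c' (s+1)) (D' s) := by
      intro s hs
      by_cases hs0 : s = 0
      · subst hs0
        rw [hc'succ, hD'succ, hD'0, hc0, hD0]
        exact hviol
      · obtain ⟨s', rfl⟩ : ∃ s', s = s' + 1 := ⟨s - 1, by omega⟩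
        rw [hc'succ, hD'succ, hD'succ]
        exact hcrav s' (by omega)
    have hhalf' : ∀ s, 1 ≤ s → s ≤ R + 1 → v (c' s) (O (c' s)) ≤ 2 * v (c' s) (D' s) := by
      intro s h1 h2
      obtain ⟨s', rfl⟩ : ∃ s', s = s' + 1 := ⟨s - 1, by omega⟩
      rw [hc'succ, hD'succ]
      exact (hmem s' (by omega)).2.1
    have hlast' : D' (R + 1) = O (c' (R + 1)) := by
      rw [hD'succ, hc'succ]; exact hlast
    have hkhalf : v k (O k) ≤ 2 * v k Z := by
      have := chainBound hmono hsubadd hv0 hO hOpt hpos (R + 1) (by omega) c' D'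
        hinj' hDsub' hcrav' hhalf' hlast'
      rw [hc'0, hD'0] at this
      exact this
    -- new allocation
    set X' := Function.update X k Z with hX'
    have hX'k : X' k = Z := by simp [hX']
    have hX'ne : ∀ a, a ≠ k → X' a = X a := by
      intro a ha; simp [hX', Function.update_of_ne ha]
    have hcard : (∑ a, (X' a).card) < ∑ a, (X a).card := by
      have h1 : ∑ a, (X' a).card
          = (∑ a ∈ (univ : Finset A) \ {k}, (X' a).card) + (X' k).card :=
        Finset.sum_eq_sum_sdiff_singleton_add (mem_univ k) _
      have h2 : ∑ a, (X a).card
          = (∑ a ∈ (univ : Finset A) \ {k}, (X a).card) + (X k).card :=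
        Finset.sum_eq_sum_sdiff_singleton_add (mem_univ k) _
      have h3 : ∑ a ∈ (univ : Finset A) \ {k}, (X' a).card
          = ∑ a ∈ (univ : Finset A) \ {k}, (X a).card := by
        refine Finset.sum_congr rfl (fun a ha => ?_)
        have : a ≠ k := by
          rcases Finset.mem_sdiff.1 ha with ⟨_, h⟩
          simpa using h
        rw [hX'ne a this]
      have h4 : (X' k).card < (X k).card := by
        rw [hX'k, hZdef]
        exact card_erase_lt_of_mem hj
      omega
    have hdisj' : Disj X' := by
      intro a b hab
      by_cases hak : a = k <;> by_cases hbk : b = k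
      · exact absurd (hak.trans hbk.symm) hab
      · have hab' : k ≠ b := by rw [← hak]; exact hab
        rw [hak, hX'k, hX'ne b hbk]
        exact Disjoint.mono_left hZsubX (hdisj k b hab')
      · have hab' : a ≠ k := by rw [← hbk]; exact hab
        rw [hbk, hX'ne a hak, hX'k]
        exact Disjoint.mono_right hZsubX (hdisj a k hab')
      · rw [hX'ne a hak, hX'ne b hbk]; exact hdisj a b hab
    have hsub' : ∀ a, X' a ⊆ O a := by
      intro a
      by_cases hak : a = k
      · rw [hak, hX'k]; exact subset_trans hZsubX (hsub k)
      · rw [hX'ne a hak]; exact hsub a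
    have hchain' : ∀ a, ChainOK v O X' a := by
      intro a
      by_cases hak : a = k
      · rw [hak]
        refine ⟨R+1, c', D', hc'0, by rw [hD'0, hX'k], hinj', hcrav', ?_, hlast'⟩
        intro s hs
        refine ⟨hDsub' s hs, ?_, ?_⟩
        · by_cases hs0 : s = 0
          · subst hs0; rw [hc'0, hD'0]; exact hkhalf
          · exact hhalf' s (by omega) hs
        · by_cases hs0 : s = 0
          · subst hs0; rw [hc'0, hD'0, hX'k]
          · obtain ⟨s', rfl⟩ : ∃ s', s = s' + 1 := ⟨s - 1, by omega⟩
            rw [hc'succ, hD'succ]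
            have hcne : c s' ≠ k := hknotin s' (by omega)
            rw [hX'ne _ hcne]
            exact (hmem s' (by omega)).2.2
      · obtain ⟨Ra, ca, Da, hca0, hDa0, hinja, hcrava, hmema, hlasta⟩ := hchain a
        refine ⟨Ra, ca, Da, hca0, by rw [hX'ne a hak]; exact hDa0, hinja, hcrava, ?_, hlasta⟩
        intro s hs
        refine ⟨(hmema s hs).1, (hmema s hs).2.1, ?_⟩
        by_cases hck : ca s = k
        · rw [hck, hX'k]
          have hx := (hmema s hs).2.2
          rw [hck] at hx
          exact subset_trans hZsubX hx
        · rw [hX'ne _ hck]; exact (hmema s hs).2.2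
    exact IH (∑ a, (X' a).card) (lt_of_lt_of_le hcard hXN) X' le_rfl hdisj' hsub' hchain'

end Phase1

section Machine

variable {v : A → Finset G → ℝ}

theorem complete_from_seed [Nonempty A]
    (hmono : ∀ i, ∀ S T : Finset G, S ⊆ T → v i S ≤ v i T)
    (hsubadd : ∀ i, ∀ S T : Finset G, v i (S ∪ T) ≤ v i S + v i T)
    (hv0 : ∀ i, v i ∅ = 0)
    (X₀ : A → Finset G) (h0d : Disj X₀) (h0e : HEFX v X₀) :
    ∃ T : A → Finset G, Disj T ∧ univ.biUnion T = (univ : Finset G) ∧ HEFX v T ∧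
      ∀ a, v a (X₀ a) ≤ v a (T a) := by
  classical
  set Y : Finset (A → Finset G) := univ.filter
      (fun X => Disj X ∧ HEFX v X ∧ ∀ a, v a (X₀ a) ≤ v a (X a)) with hYdef
  have h0 : X₀ ∈ Y := by
    simp only [hYdef, mem_filter, mem_univ, true_and]
    exact ⟨h0d, h0e, fun a => le_rfl⟩
  obtain ⟨X, hXmem, hXmax⟩ := Finset.exists_max_image Y (fun X => ∑ a, v a (X a)) ⟨X₀, h0⟩
  obtain ⟨hXd, hXe, hXfl⟩ := (mem_filter.1 hXmem).2
  set C : Finset G := univ \ univ.biUnion X with hC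
  have hCdisj : ∀ b, Disjoint C (X b) := by
    intro b
    refine disjoint_left.2 fun {g} hg hgb => ?_
    have := (mem_sdiff.1 hg).2
    exact this (mem_biUnion.2 ⟨b, mem_univ b, hgb⟩)
  -- (b) : charity is dominated
  have hcharity : ∀ Z : Finset G, Z ⊆ C → ∀ i, v i Z ≤ v i (X i) := by
    by_contra hcon
    push_neg at hcon
    obtain ⟨Z₁, hZ₁C, i₁, hviol⟩ := hcon
    set F : Finset (Finset G) := C.powerset.filter (fun Z => ∃ i, v i (X i) < v i Z) with hF
    have hFne : F.Nonempty := by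
      refine ⟨Z₁, ?_⟩
      simp only [hF, mem_filter, mem_powerset]
      exact ⟨hZ₁C, i₁, hviol⟩
    obtain ⟨Zm, hZmF, hZmmin⟩ := Finset.exists_min_image F (fun Z => Z.card) hFne
    have hZmC : Zm ⊆ C := mem_powerset.1 (mem_filter.1 hZmF).1
    obtain ⟨l, hl⟩ := (mem_filter.1 hZmF).2
    have hblock : ∀ g ∈ Zm, ∀ m, v m (Zm.erase g) ≤ v m (X m) := by
      intro g hg m
      by_contra hb
      push_neg at hb
      have hmem2 : Zm.erase g ∈ F := by
        simp only [hF, mem_filter, mem_powerset]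
        exact ⟨subset_trans (erase_subset _ _) hZmC, m, hb⟩
      have h1 := hZmmin _ hmem2
      have h2 := card_erase_lt_of_mem hg
      omega
    set X' := Function.update X l Zm with hX'
    have hX'l : X' l = Zm := by simp [hX']
    have hX'ne : ∀ a, a ≠ l → X' a = X a := by
      intro a ha; simp [hX', Function.update_of_ne ha]
    have hge : ∀ a, v a (X a) ≤ v a (X' a) := by
      intro a
      by_cases ha : a = l
      · rw [ha, hX'l]; exact le_of_lt hl
      · rw [hX'ne a ha]
    have hX'mem : X' ∈ Y := by
      simp only [hYdef, mem_filter, mem_univ, true_and]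
      refine ⟨?_, ?_, fun a => le_trans (hXfl a) (hge a)⟩
      · intro a b hab
        by_cases ha : a = l <;> by_cases hb : b = l
        · exact absurd (ha.trans hb.symm) hab
        · rw [ha, hX'l, hX'ne b hb]
          exact Disjoint.mono_left hZmC (hCdisj b)
        · rw [hb, hX'ne a ha, hX'l]
          exact Disjoint.mono_right hZmC (hCdisj a).symm
        · rw [hX'ne a ha, hX'ne b hb]; exact hXd a b hab
      · intro i k j hj
        have hTi : v i (X i) ≤ v i (X' i) := hge i
        by_cases hk : k = l
        · rw [hk, hX'l] at hj ⊢
          have h1 := hblock j hj i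
          have h2 := vnn hmono hv0 i (X i)
          linarith
        · rw [hX'ne k hk] at hj ⊢
          have := hXe i k j hj
          linarith
    have hlt : (∑ a, v a (X a)) < ∑ a, v a (X' a) := by
      refine Finset.sum_lt_sum (fun a _ => hge a) ⟨l, mem_univ l, ?_⟩
      rw [hX'l]; exact hl
    have := hXmax X' hX'mem
    linarith
  have hcharC : ∀ i, v i C ≤ v i (X i) := fun i => hcharity C subset_rfl i
  -- (d) : some agent is unenvied
  have hunenv : ∃ m, ∀ i, v i (X m) ≤ v i (X i) := by
    by_contra hcon
    push_neg at hcon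
    choose f hf using hcon
    -- find a periodic point
    obtain ⟨s, t, hst, hmap⟩ : ∃ s t : ℕ, s ≠ t ∧ f^[s] (Classical.arbitrary A) = f^[t] (Classical.arbitrary A) := by
      obtain ⟨s, t, hst, h⟩ := Finite.exists_ne_map_eq_of_infinite (fun n : ℕ => f^[n] (Classical.arbitrary A))
      exact ⟨s, t, hst, h⟩
    wlog hlt : s < t generalizing s t
    · exact this t s hst.symm hmap.symm (by omega)
    set b := f^[s] (Classical.arbitrary A) with hb
    set p := t - s with hp
    have hppos : 0 < p := by omega
    have hper : f^[p] b = b := by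
      rw [hb, hp, ← Function.iterate_add_apply]
      rw [show t - s + s = t by omega]
      exact hmap.symm
    set orb : Finset A := (range p).image (fun r => f^[r] b) with horb
    have hbin : b ∈ orb := by
      simp only [horb, mem_image]
      exact ⟨0, mem_range.2 hppos, rfl⟩
    have horb_iter : ∀ u : ℕ, f^[u] b ∈ orb := by
      intro u
      induction u using Nat.strong_induction_on with
      | _ u IH =>
        by_cases hu : u < p
        · simp only [horb, mem_image]; exact ⟨u, mem_range.2 hu, rfl⟩
        · have h1 : u - p + p = u := by omega
          have h2 : f^[u] b = f^[u - p] b := by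
            conv_lhs => rw [← h1]
            rw [Function.iterate_add_apply, hper]
          rw [h2]
          exact IH (u - p) (by omega)
    have hinv : ∀ a ∈ orb, f (f^[p-1] a) = a := by
      intro a ha
      simp only [horb, mem_image] at ha
      obtain ⟨r, hr, rfl⟩ := ha
      have h1 : f (f^[p-1] (f^[r] b)) = f^[1 + ((p - 1) + r)] b := by
        rw [Function.iterate_add_apply f 1 ((p-1)+r), Function.iterate_add_apply f (p-1) r]
        simp
      rw [h1, show 1 + ((p - 1) + r) = r + p by omega, Function.iterate_add_apply f r p, hper]
    set σ : A → A := fun a => if a ∈ orb then f^[p-1] a else a with hσ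
    have hσorb : ∀ a, a ∈ orb → σ a ∈ orb := by
      intro a ha
      simp only [horb, mem_image] at ha
      obtain ⟨r, hr, rfl⟩ := ha
      simp only [hσ]
      rw [if_pos (by simp only [horb, mem_image]; exact ⟨r, hr, rfl⟩)]
      rw [← Function.iterate_add_apply]
      exact horb_iter _
    have hfσ : ∀ a ∈ orb, f (σ a) = a := by
      intro a ha
      simp only [hσ, if_pos ha]
      exact hinv a ha
    have hσne : ∀ a a', a ≠ a' → σ a ≠ σ a' := by
      intro a a' haa heq
      by_cases ha : a ∈ orb <;> by_cases ha' : a' ∈ orb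
      · have h1 := hfσ a ha
        have h2 := hfσ a' ha'
        rw [heq] at h1
        exact haa (h1.symm.trans h2)
      · have h1 : σ a ∈ orb := hσorb a ha
        have h2 : σ a' = a' := by simp [hσ, if_neg ha']
        rw [heq, h2] at h1
        exact ha' h1
      · have h1 : σ a' ∈ orb := hσorb a' ha'
        have h2 : σ a = a := by simp [hσ, if_neg ha]
        rw [← heq, h2] at h1
        exact ha h1
      · simp only [hσ, if_neg ha, if_neg ha'] at heq
        exact haa heq
    have henvy : ∀ a ∈ orb, v a (X a) < v a (X (σ a)) := by
      intro a ha
      have h1 := hf (σ a)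
      rw [hfσ a ha] at h1
      exact h1
    set X' := fun a => X (σ a) with hX'
    have hge : ∀ a, v a (X a) ≤ v a (X' a) := by
      intro a
      by_cases ha : a ∈ orb
      · exact le_of_lt (henvy a ha)
      · simp only [hX', hσ, if_neg ha]
        exact le_rfl
    have hX'mem : X' ∈ Y := by
      simp only [hYdef, mem_filter, mem_univ, true_and]
      refine ⟨?_, ?_, fun a => le_trans (hXfl a) (hge a)⟩
      · intro a a' haa
        exact hXd (σ a) (σ a') (hσne a a' haa)
      · intro i k j hj
        simp only [hX'] at hj ⊢
        have := hXe i (σ k) j hj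
        have h2 := hge i
        simp only [hX'] at h2
        linarith
    have hlt : (∑ a, v a (X a)) < ∑ a, v a (X' a) := by
      refine Finset.sum_lt_sum (fun a _ => hge a) ⟨b, mem_univ b, ?_⟩
      exact henvy b hbin
    have := hXmax X' hX'mem
    linarith
  obtain ⟨m, hm⟩ := hunenv
  -- dump the charity on m
  set T := Function.update X m (X m ∪ C) with hT
  have hTm : T m = X m ∪ C := by simp [hT]
  have hTne : ∀ a, a ≠ m → T a = X a := by
    intro a ha; simp [hT, Function.update_of_ne ha]
  have hTge : ∀ a, v a (X a) ≤ v a (T a) := by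
    intro a
    by_cases ha : a = m
    · rw [ha, hTm]; exact hmono _ _ _ subset_union_left
    · rw [hTne a ha]
  refine ⟨T, ?_, ?_, ?_, fun a => le_trans (hXfl a) (hTge a)⟩
  · intro a a' haa
    by_cases ha : a = m <;> by_cases ha' : a' = m
    · exact absurd (ha.trans ha'.symm) haa
    · have haa' : m ≠ a' := by rw [← ha]; exact haa
      rw [ha, hTm, hTne a' ha']
      exact disjoint_union_left.2 ⟨hXd m a' haa', (hCdisj a').symm.symm⟩
    · have haa' : a ≠ m := by rw [← ha']; exact haa
      rw [ha', hTne a haa', hTm]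
      exact disjoint_union_right.2 ⟨hXd a m haa', (hCdisj a).symm⟩
    · rw [hTne a ha, hTne a' ha']; exact hXd a a' haa
  · apply Finset.Subset.antisymm (subset_univ _)
    intro g _
    by_cases hg : g ∈ univ.biUnion X
    · obtain ⟨k, _, hk⟩ := mem_biUnion.1 hg
      refine mem_biUnion.2 ⟨k, mem_univ k, ?_⟩
      by_cases hkm : k = m
      · rw [hkm] at hk ⊢
        rw [hTm]; exact mem_union_left _ hk
      · rw [hTne k hkm]; exact hk
    · refine mem_biUnion.2 ⟨m, mem_univ m, ?_⟩
      rw [hTm]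
      exact mem_union_right _ (mem_sdiff.2 ⟨mem_univ g, hg⟩)
  · intro i k j hj
    by_cases hk : k = m
    · rw [hk, hTm] at hj ⊢
      by_cases hi : i = m
      · rw [hi]
        have h1 : v m ((X m ∪ C).erase j) ≤ v m (T m) := by
          rw [hTm]; exact hmono _ _ _ (erase_subset _ _)
        have h2 := vnn hmono hv0 m ((X m ∪ C).erase j)
        linarith
      · have h1 : v i ((X m ∪ C).erase j) ≤ v i (X m) + v i C := by
          refine vsub2 hmono hsubadd i ?_
          exact subset_trans (erase_subset _ _) subset_rfl
        have h2 := hm i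
        have h3 := hcharC i
        have h4 : v i (X i) ≤ v i (T i) := hTge i
        linarith
    · rw [hTne k hk] at hj ⊢
      have h1 := hXe i k j hj
      have h2 := hTge i
      linarith

end Machine

end HalfEFX

open Finset HalfEFX in
/-- (Theorem on completing a partial allocation.) For agents with
monotone subadditive valuations and any partial allocation `S`, there exists a
complete allocation `T` (a partition of `G`) that is ½-EFX and satisfies
`NSW(T) ≥ ½·NSW(S)`. -/
theorem half_EFX_complete_allocation {G A : Type*} [Fintype G] [DecidableEq G]
    [Fintype A] [DecidableEq A] [Nonempty A]
    (n : ℕ) (hn : n = Fintype.card A)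
    (v : A → Finset G → ℝ)
    (hmono : ∀ i, ∀ S T : Finset G, S ⊆ T → v i S ≤ v i T)
    (hsubadd : ∀ i, ∀ S T : Finset G, v i (S ∪ T) ≤ v i S + v i T)
    (hv0 : ∀ i, v i ∅ = 0)
    (S : A → Finset G)
    (hSdisj : ∀ i k, i ≠ k → Disjoint (S i) (S k)) :
    ∃ T : A → Finset G,
      (∀ i k, i ≠ k → Disjoint (T i) (T k)) ∧
      Finset.univ.biUnion T = (univ : Finset G) ∧
      (∀ i k : A, ∀ j ∈ T k, (1 / 2 : ℝ) * v i ((T k).erase j) ≤ v i (T i)) ∧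
      (1 / 2 : ℝ) * ∏ i, v i (S i) ^ ((n : ℝ)⁻¹) ≤ ∏ i, v i (T i) ^ ((n : ℝ)⁻¹) := by
  classical
  have hnn : ∀ i (B : Finset G), 0 ≤ v i B := fun i B => vnn hmono hv0 i B
  have hncard : 0 < n := by rw [hn]; exact Fintype.card_pos
  have hA : (n : ℝ) ≠ 0 := Nat.cast_ne_zero.2 (by omega)
  have hcinv : ((n : ℝ)⁻¹) ≠ 0 := inv_ne_zero hA
  have hc0 : (0:ℝ) ≤ (n : ℝ)⁻¹ := by positivity
  by_cases hz : ∃ i, v i (S i) = 0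
  · -- some agent values its original bundle at 0 : the NSW bound is trivial
    have hseedd : Disj (fun _ : A => (∅ : Finset G)) := by
      intro i k h; simp
    have hseede : HEFX v (fun _ : A => (∅ : Finset G)) := by
      intro i k j hj; exact absurd hj (notMem_empty j)
    obtain ⟨T, hTd, hTc, hTe, _⟩ :=
      complete_from_seed hmono hsubadd hv0 (fun _ => ∅) hseedd hseede
    refine ⟨T, hTd, hTc, ?_, ?_⟩
    · intro i k j hj
      have := hTe i k j hj
      linarith
    · obtain ⟨i₀, hi₀⟩ := hz
      have hL : (∏ i, v i (S i) ^ ((n : ℝ)⁻¹)) = 0 := by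
        refine Finset.prod_eq_zero (mem_univ i₀) ?_
        rw [hi₀]
        exact Real.zero_rpow hcinv
      rw [hL]
      have h0 : (0:ℝ) ≤ ∏ i, v i (T i) ^ ((n : ℝ)⁻¹) :=
        Finset.prod_nonneg fun i _ => Real.rpow_nonneg (hnn i _) _
      linarith
  · push_neg at hz
    have hSpos : ∀ i, 0 < v i (S i) := fun i => lt_of_le_of_ne (hnn i _) (Ne.symm (hz i))
    obtain ⟨O, hOd, hOopt⟩ := exists_opt (v := v) hmono hv0
    have hprodS : 0 < prodv v S := Finset.prod_pos fun i _ => hSpos i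
    have hprodO : 0 < prodv v O := lt_of_lt_of_le hprodS (hOopt S hSdisj)
    have hOpos : ∀ a, 0 < v a (O a) := by
      intro a
      rcases (hnn a (O a)).lt_or_eq with h | h
      · exact h
      · exfalso
        have hzz : prodv v O = 0 := Finset.prod_eq_zero (mem_univ a) h.symm
        rw [hzz] at hprodO
        exact lt_irrefl 0 hprodO
    obtain ⟨X1, hX1d, hX1e, hX1half⟩ := phase1 hmono hsubadd hv0 hOd hOopt hOpos
    obtain ⟨T, hTd, hTc, hTe, hTge⟩ := complete_from_seed hmono hsubadd hv0 X1 hX1d hX1e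
    have hhalf : ∀ a, v a (O a) ≤ 2 * v a (T a) := by
      intro a
      have h1 := hX1half a
      have h2 := hTge a
      linarith
    refine ⟨T, hTd, hTc, ?_, ?_⟩
    · intro i k j hj
      have := hTe i k j hj
      linarith
    · have h1 : (∏ i, v i (S i) ^ ((n : ℝ)⁻¹)) = (∏ i, v i (S i)) ^ ((n : ℝ)⁻¹) :=
        Real.finset_prod_rpow _ _ (fun i _ => hnn i _) _
      have h2 : (∏ i, v i (T i) ^ ((n : ℝ)⁻¹)) = (∏ i, v i (T i)) ^ ((n : ℝ)⁻¹) :=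
        Real.finset_prod_rpow _ _ (fun i _ => hnn i _) _
      have h3 : (∏ i, v i (S i)) ≤ ∏ i, v i (O i) := hOopt S hSdisj
      have h4 : (∏ i, v i (O i)) ≤ ∏ i, (2 * v i (T i)) :=
        Finset.prod_le_prod (fun i _ => le_of_lt (hOpos i)) (fun i _ => hhalf i)
      have h5 : (∏ i, (2 * v i (T i))) = 2 ^ n * ∏ i, v i (T i) := by
        rw [Finset.prod_mul_distrib, Finset.prod_const, Finset.card_univ, ← hn]
      have h6 : (∏ i, v i (S i)) ^ ((n : ℝ)⁻¹) ≤ ((2:ℝ) ^ n * ∏ i, v i (T i)) ^ ((n : ℝ)⁻¹) := by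
        refine Real.rpow_le_rpow (le_of_lt hprodS) ?_ hc0
        calc (∏ i, v i (S i)) ≤ ∏ i, v i (O i) := h3
          _ ≤ ∏ i, (2 * v i (T i)) := h4
          _ = 2 ^ n * ∏ i, v i (T i) := h5
      have h7 : ((2:ℝ) ^ n * ∏ i, v i (T i)) ^ ((n : ℝ)⁻¹)
          = ((2:ℝ) ^ n) ^ ((n : ℝ)⁻¹) * (∏ i, v i (T i)) ^ ((n : ℝ)⁻¹) :=
        Real.mul_rpow (by positivity) (Finset.prod_nonneg fun i _ => hnn i _)
      have h8 : ((2:ℝ) ^ n) ^ ((n : ℝ)⁻¹) = 2 := by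
        rw [← Real.rpow_natCast 2 n, ← Real.rpow_mul (by norm_num : (0:ℝ) ≤ 2)]
        rw [mul_inv_cancel₀ hA]
        exact Real.rpow_one 2
      rw [h1, h2]
      rw [h7, h8] at h6
      linarith
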